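/- arXiv:1901.00592 — 3 statements merged into one kernel-verified Lean document; each statement's English description precedes it below -/
import Mathlib

section
/- The category of site-graphs has all pullbacks: for every cospan G1 → M ← G2 of site-graph morphisms there exists a site-graph O with morphisms g1 : O → G1, g2 : O → G2 making the square commute, and satisfying the universal property of the pullback. -/
open CategoryTheory

structure SiteGraph (K : Type) (site : K → ℕ) : Type 1 where
  Agent : Type
  ty : Agent → K
  nodes : Set (Option (Agent × ℕ))
  free_mem : none ∈ nodes
  nodes_ok : ∀ a i, some (a, i) ∈ nodes → i < site (ty a)
  edges : Set (Option (Agent × ℕ) × Option (Agent × ℕ))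
  edges_sub : ∀ e ∈ edges, e.1 ∈ nodes ∧ e.2 ∈ nodes
  edges_symm : ∀ n m, (n, m) ∈ edges → (m, n) ∈ edges
  conflict_free : ∀ n1 n2 n1' n2',
    (n1, n2) ∈ edges → (n1', n2') ∈ edges →
    (n1 = n1' ∧ n2 = n2') ∨ (n1 = n2' ∧ n2 = n1') ∨
    (({n1, n2} ∩ {n1', n2'} : Set (Option (Agent × ℕ))) ⊆ {none})

namespace SiteGraph

variable {K : Type} {site : K → ℕ}

/-- The action of an agent map on nodes: `free` (i.e. `none`) goes to `free`,
`(a, i)` goes to `(v a, i)`. -/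
def nodeMap {A B : Type} (v : A → B) : Option (A × ℕ) → Option (B × ℕ) :=
  Option.map fun p => (v p.1, p.2)

@[simp] lemma nodeMap_id {A : Type} (n : Option (A × ℕ)) : nodeMap id n = n := by
  cases n <;> rfl

@[simp] lemma nodeMap_comp {A B C : Type} (v : A → B) (w : B → C) (n : Option (A × ℕ)) :
    nodeMap w (nodeMap v n) = nodeMap (w ∘ v) n := by cases n <;> rfl

/-- A morphism of site-graphs. -/
@[ext]
structure Hom (G H : SiteGraph K site) : Type where
  v : G.Agent → H.Agent
  pres_ty : ∀ a, H.ty (v a) = G.ty a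
  maps_nodes : ∀ n ∈ G.nodes, nodeMap v n ∈ H.nodes
  maps_edges : ∀ e ∈ G.edges, (nodeMap v e.1, nodeMap v e.2) ∈ H.edges

def idHom (G : SiteGraph K site) : Hom G G where
  v := id
  pres_ty _ := rfl
  maps_nodes n hn := by simpa using hn
  maps_edges e he := by rcases e with ⟨n, m⟩; simpa using he

def compHom {G H I : SiteGraph K site} (f : Hom G H) (g : Hom H I) : Hom G I where
  v := g.v ∘ f.v
  pres_ty a := (g.pres_ty _).trans (f.pres_ty a)
  maps_nodes n hn := by
    rw [← nodeMap_comp]; exact g.maps_nodes _ (f.maps_nodes n hn)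
  maps_edges e he := by
    rw [← nodeMap_comp, ← nodeMap_comp]
    exact g.maps_edges _ (f.maps_edges e he)

instance : Category (SiteGraph K site) where
  Hom := Hom
  id := idHom
  comp := compHom
  id_comp _ := rfl
  comp_id _ := rfl
  assoc _ _ _ := rfl

end SiteGraph

open CategoryTheory SiteGraph

section Aux

variable {K : Type} {site : K → ℕ}

private lemma mixed_case {N X Y : Type} {F : N → X} {G : N → Y}
    (inj : ∀ a b, F a = F b → G a = G b → a = b) {n1 n2 n1' n2' : N}
    (e1 : F n1 = F n1') (e2 : F n2 = F n2')
    (s1 : G n1 = G n2') (s2 : G n2 = G n1')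
    (hx : n1 = n1' ∨ n1 = n2' ∨ n2 = n1' ∨ n2 = n2') :
    (n1 = n1' ∧ n2 = n2') ∨ (n1 = n2' ∧ n2 = n1') := by
  rcases hx with h | h | h | h
  · exact Or.inl ⟨h, inj _ _ e2 (by rw [s2, ← h]; exact s1)⟩
  · exact Or.inr ⟨h, inj _ _ (by rw [e2, ← h]; exact e1) s2⟩
  · exact Or.inr ⟨inj _ _ (by rw [e1, ← h]; exact e2) s1, h⟩
  · exact Or.inl ⟨inj _ _ e1 (by rw [s1, ← h]; exact s2), h⟩

private lemma nodeMap_none {A B : Type} {v : A → B} {n : Option (A × ℕ)}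
    (h : nodeMap v n = none) : n = none := by
  cases n
  · rfl
  · simp [nodeMap] at h

variable {G1 G2 M : SiteGraph K site} (f : Hom G1 M) (g : Hom G2 M)

/-- The agents of the pullback. -/
private def PBAgent : Type := {p : G1.Agent × G2.Agent // f.v p.1 = g.v p.2}

private def pr1 : PBAgent f g → G1.Agent := fun a => a.1.1
private def pr2 : PBAgent f g → G2.Agent := fun a => a.1.2

private lemma pb_node_inj {n m : Option (PBAgent f g × ℕ)}
    (h1 : nodeMap (pr1 f g) n = nodeMap (pr1 f g) m)
    (h2 : nodeMap (pr2 f g) n = nodeMap (pr2 f g) m) : n = m := by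
  cases n with
  | none => cases m with
    | none => rfl
    | some b => simp [nodeMap] at h1
  | some a => cases m with
    | none => simp [nodeMap] at h1
    | some b =>
      simp only [nodeMap, Option.map_some, Option.some.injEq, Prod.mk.injEq] at h1 h2
      obtain ⟨ha1, hi⟩ := h1
      obtain ⟨ha2, -⟩ := h2
      have : a.1 = b.1 := Subtype.ext (Prod.ext ha1 ha2)
      exact congrArg some (Prod.ext this hi)

/-- The pullback site-graph. -/
private def PB : SiteGraph K site where
  Agent := PBAgent f g
  ty a := G1.ty (pr1 f g a)
  nodes := {n | nodeMap (pr1 f g) n ∈ G1.nodes ∧ nodeMap (pr2 f g) n ∈ G2.nodes}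
  free_mem := ⟨G1.free_mem, G2.free_mem⟩
  nodes_ok a i h := G1.nodes_ok _ i h.1
  edges := {e | (nodeMap (pr1 f g) e.1, nodeMap (pr1 f g) e.2) ∈ G1.edges ∧
                (nodeMap (pr2 f g) e.1, nodeMap (pr2 f g) e.2) ∈ G2.edges}
  edges_sub e he :=
    ⟨⟨(G1.edges_sub _ he.1).1, (G2.edges_sub _ he.2).1⟩,
     ⟨(G1.edges_sub _ he.1).2, (G2.edges_sub _ he.2).2⟩⟩
  edges_symm n m h := ⟨G1.edges_symm _ _ h.1, G2.edges_symm _ _ h.2⟩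
  conflict_free := by
    intro n1 n2 n1' n2' h h'
    have H1 := G1.conflict_free _ _ _ _ h.1 h'.1
    have H2 := G2.conflict_free _ _ _ _ h.2 h'.2
    -- helper to dispatch the "intersection ⊆ {none}" case
    have sub1 : ∀ {v : PBAgent f g → G1.Agent},
        (({nodeMap v n1, nodeMap v n2} ∩ {nodeMap v n1', nodeMap v n2'} :
            Set (Option (G1.Agent × ℕ))) ⊆ {none}) →
        (({n1, n2} ∩ {n1', n2'} : Set (Option (PBAgent f g × ℕ))) ⊆ {none}) := by
      intro v hs x hx
      have : nodeMap v x ∈ ({none} : Set (Option (G1.Agent × ℕ))) := by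
        apply hs
        constructor
        · rcases hx.1 with rfl | rfl
          · exact Or.inl rfl
          · exact Or.inr rfl
        · rcases hx.2 with rfl | rfl
          · exact Or.inl rfl
          · exact Or.inr rfl
      exact nodeMap_none this
    have sub2 : ∀ {v : PBAgent f g → G2.Agent},
        (({nodeMap v n1, nodeMap v n2} ∩ {nodeMap v n1', nodeMap v n2'} :
            Set (Option (G2.Agent × ℕ))) ⊆ {none}) →
        (({n1, n2} ∩ {n1', n2'} : Set (Option (PBAgent f g × ℕ))) ⊆ {none}) := by
      intro v hs x hx
      have : nodeMap v x ∈ ({none} : Set (Option (G2.Agent × ℕ))) := by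
        apply hs
        constructor
        · rcases hx.1 with rfl | rfl
          · exact Or.inl rfl
          · exact Or.inr rfl
        · rcases hx.2 with rfl | rfl
          · exact Or.inl rfl
          · exact Or.inr rfl
      exact nodeMap_none this
    rcases H1 with ⟨e1, e2⟩ | ⟨s1, s2⟩ | hs
    · rcases H2 with ⟨e1', e2'⟩ | ⟨s1', s2'⟩ | hs'
      · exact Or.inl ⟨pb_node_inj f g e1 e1', pb_node_inj f g e2 e2'⟩
      · -- mixed: eq on G1, swap on G2
        by_cases hmem : ({n1, n2} ∩ {n1', n2'} : Set (Option (PBAgent f g × ℕ))) ⊆ {none} ∪ ∅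
        · exact Or.inr (Or.inr (by simpa using hmem))
        · have : ∃ x, x ∈ ({n1, n2} ∩ {n1', n2'} : Set (Option (PBAgent f g × ℕ))) ∧
              x ∉ ({none} : Set (Option (PBAgent f g × ℕ))) := by
            by_contra hc
            push_neg at hc
            exact hmem fun x hx => by simpa using hc x hx
          obtain ⟨x, hx, -⟩ := this
          have hmix : n1 = n1' ∨ n1 = n2' ∨ n2 = n1' ∨ n2 = n2' := by
            rcases hx.1 with rfl | rfl <;> rcases hx.2 with h | h
            · exact Or.inl h
            · exact Or.inr (Or.inl h)
            · exact Or.inr (Or.inr (Or.inl h))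
            · exact Or.inr (Or.inr (Or.inr h))
          rcases mixed_case (fun a b => pb_node_inj f g) e1 e2 s1' s2' hmix with h | h
          · exact Or.inl h
          · exact Or.inr (Or.inl h)
      · exact Or.inr (Or.inr (sub2 hs'))
    · rcases H2 with ⟨e1', e2'⟩ | ⟨s1', s2'⟩ | hs'
      · -- mixed: swap on G1, eq on G2
        by_cases hmem : ({n1, n2} ∩ {n1', n2'} : Set (Option (PBAgent f g × ℕ))) ⊆ {none} ∪ ∅
        · exact Or.inr (Or.inr (by simpa using hmem))
        · have : ∃ x, x ∈ ({n1, n2} ∩ {n1', n2'} : Set (Option (PBAgent f g × ℕ))) ∧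
              x ∉ ({none} : Set (Option (PBAgent f g × ℕ))) := by
            by_contra hc
            push_neg at hc
            exact hmem fun x hx => by simpa using hc x hx
          obtain ⟨x, hx, -⟩ := this
          have hmix : n1 = n1' ∨ n1 = n2' ∨ n2 = n1' ∨ n2 = n2' := by
            rcases hx.1 with rfl | rfl <;> rcases hx.2 with h | h
            · exact Or.inl h
            · exact Or.inr (Or.inl h)
            · exact Or.inr (Or.inr (Or.inl h))
            · exact Or.inr (Or.inr (Or.inr h))
          rcases mixed_case (fun a b h1 h2 => pb_node_inj f g h2 h1) e1' e2' s1 s2 hmix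
            with h | h
          · exact Or.inl h
          · exact Or.inr (Or.inl h)
      · exact Or.inr (Or.inl ⟨pb_node_inj f g s1 s1', pb_node_inj f g s2 s2'⟩)
      · exact Or.inr (Or.inr (sub2 hs'))
    · exact Or.inr (Or.inr (sub1 hs))

/-- First projection of the pullback. -/
private def pbFst : Hom (PB f g) G1 where
  v := pr1 f g
  pres_ty _ := rfl
  maps_nodes _ hn := hn.1
  maps_edges _ he := he.1

/-- Second projection of the pullback. -/
private def pbSnd : Hom (PB f g) G2 where
  v := pr2 f g
  pres_ty a := by
    have h1 : M.ty (f.v (pr1 f g a)) = G1.ty (pr1 f g a) := f.pres_ty _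
    have h2 : M.ty (g.v (pr2 f g a)) = G2.ty (pr2 f g a) := g.pres_ty _
    have : f.v (pr1 f g a) = g.v (pr2 f g a) := a.2
    rw [← h2, ← this, h1]
    rfl
  maps_nodes _ hn := hn.2
  maps_edges _ he := he.2

end Aux

/-- The category of site-graphs has all pullbacks. -/
theorem siteGraphs_hasPullbacks (K : Type) (site : K → ℕ) :
    Limits.HasPullbacks (SiteGraph K site) := by
  have : ∀ {G1 G2 M : SiteGraph K site} {f : G1 ⟶ M} {g : G2 ⟶ M},
      Limits.HasLimit (Limits.cospan f g) := by
    intro G1 G2 M f g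
    have comm : (pbFst f g : PB f g ⟶ G1) ≫ f = (pbSnd f g : PB f g ⟶ G2) ≫ g := by
      apply Hom.ext
      funext a
      exact a.2
    apply Limits.HasLimit.mk
      ⟨Limits.PullbackCone.mk (pbFst f g) (pbSnd f g) comm, ?_⟩
    refine Limits.PullbackCone.IsLimit.mk comm
      (fun s => ?_) (fun s => ?_) (fun s => ?_) (fun s m h1 h2 => ?_)
    · -- lift
      exact
        { v := fun a => ⟨(s.fst.v a, s.snd.v a), congrFun (congrArg Hom.v s.condition) a⟩
          pres_ty := fun a => s.fst.pres_ty a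
          maps_nodes := fun n hn => by
            constructor
            · have := s.fst.maps_nodes n hn
              rcases n with _ | ⟨a, i⟩ <;> exact this
            · have := s.snd.maps_nodes n hn
              rcases n with _ | ⟨a, i⟩ <;> exact this
          maps_edges := fun e he => by
            constructor
            · have := s.fst.maps_edges e he
              obtain ⟨n, m⟩ := e
              rcases n with _ | ⟨a, i⟩ <;> rcases m with _ | ⟨b, j⟩ <;>
                exact this
            · have := s.snd.maps_edges e he
              obtain ⟨n, m⟩ := e
              rcases n with _ | ⟨a, i⟩ <;> rcases m with _ | ⟨b, j⟩ <;>
                exact this }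
    · apply Hom.ext; rfl
    · apply Hom.ext; rfl
    · apply Hom.ext
      funext a
      have e1 : (m ≫ pbFst f g).v a = s.fst.v a := congrFun (congrArg Hom.v h1) a
      have e2 : (m ≫ pbSnd f g).v a = s.snd.v a := congrFun (congrArg Hom.v h2) a
      exact Subtype.ext (Prod.ext e1 e2)
  exact Limits.hasPullbacks_of_hasLimit_cospan _
end

section
/- The category of site-graphs does not have all pushouts: there exists a span G1 ← O → G2 of monomorphisms of site-graphs that has no pushout. -/
open CategoryTheory

open CategoryTheory SiteGraph

/-- The overlap: one agent with one site, no edges. -/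
def cexO : SiteGraph Unit (fun _ => 1) where
  Agent := Unit
  ty _ := ()
  nodes := {none, some ((), 0)}
  free_mem := Or.inl rfl
  nodes_ok := by rintro a i (h | h) <;> simp_all
  edges := ∅
  edges_sub := by rintro e ⟨⟩
  edges_symm := by rintro n m ⟨⟩
  conflict_free := by rintro _ _ _ _ ⟨⟩

/-- G1: the agent's site is free (edge to `none`). -/
def cexG1 : SiteGraph Unit (fun _ => 1) where
  Agent := Unit
  ty _ := ()
  nodes := {none, some ((), 0)}
  free_mem := Or.inl rfl
  nodes_ok := by rintro a i (h | h) <;> simp_all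
  edges := {(some ((), 0), none), (none, some ((), 0))}
  edges_sub := by rintro e (h | h) <;> subst h <;> exact ⟨by simp, by simp⟩
  edges_symm := by
    rintro n m h
    simp only [Set.mem_insert_iff, Set.mem_singleton_iff, Prod.mk.injEq] at h ⊢
    tauto
  conflict_free := by
    rintro n1 n2 n1' n2' h h'
    simp only [Set.mem_insert_iff, Set.mem_singleton_iff, Prod.mk.injEq] at h h'
    rcases h with ⟨rfl, rfl⟩ | ⟨rfl, rfl⟩ <;> rcases h' with ⟨rfl, rfl⟩ | ⟨rfl, rfl⟩ <;> simp

/-- G2: the agent's site is bound to another agent. -/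
def cexG2 : SiteGraph Unit (fun _ => 1) where
  Agent := Bool
  ty _ := ()
  nodes := {none, some (false, 0), some (true, 0)}
  free_mem := Or.inl rfl
  nodes_ok := by rintro a i (h | h | h) <;> simp_all
  edges := {(some (false, 0), some (true, 0)), (some (true, 0), some (false, 0))}
  edges_sub := by rintro e (h | h) <;> subst h <;> exact ⟨by simp, by simp⟩
  edges_symm := by
    rintro n m h
    simp only [Set.mem_insert_iff, Set.mem_singleton_iff, Prod.mk.injEq] at h ⊢
    tauto
  conflict_free := by
    rintro n1 n2 n1' n2' h h'
    simp only [Set.mem_insert_iff, Set.mem_singleton_iff, Prod.mk.injEq] at h h'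
    rcases h with ⟨rfl, rfl⟩ | ⟨rfl, rfl⟩ <;> rcases h' with ⟨rfl, rfl⟩ | ⟨rfl, rfl⟩ <;> simp

def cexf : cexO ⟶ cexG1 where
  v := id
  pres_ty _ := rfl
  maps_nodes n hn := by
    rcases hn with h | h <;> subst h
    · exact Or.inl rfl
    · exact Or.inr rfl
  maps_edges := by rintro e ⟨⟩

def cexg : cexO ⟶ cexG2 where
  v _ := false
  pres_ty _ := rfl
  maps_nodes n hn := by
    rcases hn with h | h <;> subst h
    · exact Or.inl rfl
    · exact Or.inr (Or.inl rfl)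
  maps_edges := by rintro e ⟨⟩

/-- The category of site-graphs does not have all pushouts: there is a
span of monomorphisms of site-graphs with no pushout. -/
theorem siteGraphs_not_all_pushouts :
    ∃ (K : Type) (site : K → ℕ) (O G1 G2 : SiteGraph K site)
      (f : O ⟶ G1) (g : O ⟶ G2),
      Mono f ∧ Mono g ∧ ¬ Limits.HasColimit (Limits.span f g) := by
  classical
  refine ⟨Unit, fun _ => 1, cexO, cexG1, cexG2, cexf, cexg, ?_, ?_, ?_⟩
  · constructor
    intro X u w _
    apply SiteGraph.Hom.ext
    funext a
    rfl
  · constructor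
    intro X u w _
    apply SiteGraph.Hom.ext
    funext a
    rfl
  · intro h
    let H := Limits.colimit (Limits.span cexf cexg)
    let h1 : cexG1 ⟶ H := Limits.colimit.ι (Limits.span cexf cexg) Limits.WalkingSpan.left
    let h2 : cexG2 ⟶ H := Limits.colimit.ι (Limits.span cexf cexg) Limits.WalkingSpan.right
    have hcomm : cexf ≫ h1 = cexg ≫ h2 := by
      have w1 := Limits.colimit.w (Limits.span cexf cexg) Limits.WalkingSpan.Hom.fst
      have w2 := Limits.colimit.w (Limits.span cexf cexg) Limits.WalkingSpan.Hom.snd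
      simp only [Limits.span_map_fst, Limits.span_map_snd] at w1 w2
      exact w1.trans w2.symm
    have hx : h2.v false = h1.v () := by
      have := congrArg SiteGraph.Hom.v hcomm
      exact (congrFun this ()).symm
    set x := h1.v () with hxdef
    -- the "free" edge in H
    have e1 : ((some (x, 0) : Option (H.Agent × ℕ)), none) ∈ H.edges := by
      have := h1.maps_edges (some ((), 0), none) (by left; rfl)
      simpa [nodeMap, ← hxdef] using this
    -- the "bound" edge in H
    have e2 : ((some (x, 0) : Option (H.Agent × ℕ)), some (h2.v true, 0)) ∈ H.edges := by
      have := h2.maps_edges (some (false, 0), some (true, 0)) (by left; rfl)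
      simpa [nodeMap, hx] using this
    rcases H.conflict_free _ _ _ _ e1 e2 with ⟨_, h⟩ | ⟨_, h⟩ | h
    · cases h
    · simp at h
    · have : (some (x, 0) : Option (H.Agent × ℕ)) ∈ ({none} : Set _) := by
        apply h
        constructor <;> simp
      simp at this
end

section
/- Round-trip completeness of concretization (Theorem 1, part 2): for any trace θ and any trace θ' ∈ C(A2(A1(θ))), the poset abstractions of θ and θ' are isomorphic: A2(A1(θ)) ≅ A2(A1(θ')). -/
/-- A trace, presented by the data relevant to abstraction: events are the positions
`Fin n` (in the temporal order of the trace), each labeled by its underlying rule, with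
the span-witnessed enablement (`pos i j f` iff `(t_i, t_j, f) ∈ <_θ`) and prevention
(`neg i j f` iff `(t_i, t_j, f) ∈ ⊣_θ`) relations between its transitions. -/
structure RawTrace (R S : Type) where
  n : ℕ
  label : Fin n → R
  pos : Fin n → Fin n → S → Prop
  neg : Fin n → Fin n → S → Prop

/-- A poset of events: events, rule labels, enabling precedence `≤` and non-enabling
precedence `⊢`. -/
structure EvPoset (R : Type) where
  E : Type
  label : E → R
  le : E → E → Prop
  vdash : E → E → Prop

/-- The abstraction `A2 ∘ A1` of a trace: `e < e'` iff `∃ f, e ⇀+_f e'`, `e ⊩ e'` iff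
`∃ f, e' ⇀−_f e`, and `≤`, `⊢` are the reflexive-transitive closures. -/
def absPoset {R S : Type} (θ : RawTrace R S) : EvPoset R where
  E := Fin θ.n
  label := θ.label
  le := Relation.ReflTransGen fun i j => ∃ f, θ.pos i j f
  vdash := Relation.ReflTransGen fun i j => ∃ f, θ.neg j i f

/-- The reduced relation (transitive reduction) of a preorder-like relation. -/
def reduced {E : Type} (r : E → E → Prop) (e e' : E) : Prop :=
  r e e' ∧ e ≠ e' ∧ ¬ ∃ e'', e'' ≠ e ∧ e'' ≠ e' ∧ r e e'' ∧ r e'' e'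

/-- The concretizations `C(P)` of a poset `P`, relative to the rule-influence relations
`posRule`, `negRule`: traces given by a linearization `σ` of the events of `P`
(compatible with both precedence orders, as required for the transitions to compose),
whose transitions carry the labels of `P` and reproduce exactly the enablement and
prevention relations recovered by `C1` from rule influence and the reduced relations of
`≤` and `⊢`. -/
def conc {R S : Type} (posRule negRule : R → R → S → Prop) (P : EvPoset R) :
    Set (RawTrace R S) :=
  {θ | ∃ σ : P.E ≃ Fin θ.n,
    (∀ e, θ.label (σ e) = P.label e) ∧
    (∀ e e', P.le e e' → (σ e : ℕ) ≤ (σ e' : ℕ)) ∧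
    (∀ e e', P.vdash e e' → (σ e : ℕ) ≤ (σ e' : ℕ)) ∧
    (∀ e e' f, θ.pos (σ e) (σ e') f ↔
      (posRule (P.label e) (P.label e') f ∧ reduced P.le e e')) ∧
    (∀ e e' f, θ.neg (σ e) (σ e') f ↔
      (negRule (P.label e) (P.label e') f ∧ reduced P.vdash e' e))}

/-- An isomorphism of posets of events: a bijection on events preserving the labels and
both precedence orders. -/
structure EvPosetIso {R : Type} (P Q : EvPoset R) where
  toEquiv : P.E ≃ Q.E
  label_eq : ∀ e, Q.label (toEquiv e) = P.label e
  le_iff : ∀ e e', P.le e e' ↔ Q.le (toEquiv e) (toEquiv e')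
  vdash_iff : ∀ e e', P.vdash e e' ↔ Q.vdash (toEquiv e) (toEquiv e')

theorem aux_le {n : ℕ} {r : Fin n → Fin n → Prop}
    (hr : ∀ a b, r a b → (a : ℕ) < (b : ℕ)) {a b : Fin n}
    (h : Relation.ReflTransGen r a b) : (a : ℕ) ≤ (b : ℕ) := by
  induction h with
  | refl => exact le_refl _
  | tail _ hbc ih => exact ih.trans (hr _ _ hbc).le

theorem aux_lt {n : ℕ} {r : Fin n → Fin n → Prop}
    (hr : ∀ a b, r a b → (a : ℕ) < (b : ℕ)) {a b : Fin n}
    (h : Relation.ReflTransGen r a b) (hne : a ≠ b) : (a : ℕ) < (b : ℕ) := by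
  rcases h.cases_head with heq | ⟨c, hac, hcb⟩
  · exact absurd heq hne
  · exact lt_of_lt_of_le (hr _ _ hac) (aux_le hr hcb)

theorem red_step {n : ℕ} {r : Fin n → Fin n → Prop}
    (hr : ∀ a b, r a b → (a : ℕ) < (b : ℕ)) {a b : Fin n}
    (h : reduced (Relation.ReflTransGen r) a b) : r a b := by
  obtain ⟨hle, hne, hnex⟩ := h
  rcases hle.cases_head with heq | ⟨c, hac, hcb⟩
  · exact absurd heq hne
  · by_cases hcb' : c = b
    · subst hcb'; exact hac
    · have hca : c ≠ a := by
        intro h; subst h; exact absurd (hr _ _ hac) (lt_irrefl _)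
      exact absurd ⟨c, hca, hcb', Relation.ReflTransGen.single hac, hcb⟩ hnex

theorem to_red {n : ℕ} {r : Fin n → Fin n → Prop}
    (hr : ∀ a b, r a b → (a : ℕ) < (b : ℕ)) {a b : Fin n}
    (h : Relation.ReflTransGen r a b) :
    Relation.ReflTransGen (reduced (Relation.ReflTransGen r)) a b := by
  have key : ∀ k, ∀ a b : Fin n, (b : ℕ) - (a : ℕ) ≤ k → Relation.ReflTransGen r a b →
      Relation.ReflTransGen (reduced (Relation.ReflTransGen r)) a b := by
    intro k
    induction k with
    | zero =>
      intro a b hk h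
      have hab : a = b := by
        by_contra hne
        have := aux_lt hr h hne
        omega
      subst hab; exact Relation.ReflTransGen.refl
    | succ k ih =>
      intro a b hk h
      by_cases hab : a = b
      · subst hab; exact Relation.ReflTransGen.refl
      · by_cases hred : reduced (Relation.ReflTransGen r) a b
        · exact Relation.ReflTransGen.single hred
        · have hex : ∃ c, c ≠ a ∧ c ≠ b ∧ Relation.ReflTransGen r a c ∧
              Relation.ReflTransGen r c b := by
            by_contra hc
            exact hred ⟨h, hab, fun ⟨c, h1, h2, h3, h4⟩ => hc ⟨c, h1, h2, h3, h4⟩⟩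
          obtain ⟨c, hca, hcb, hac, hcbl⟩ := hex
          have h1 : (a : ℕ) < (c : ℕ) := aux_lt hr hac (Ne.symm hca)
          have h2 : (c : ℕ) < (b : ℕ) := aux_lt hr hcbl hcb
          exact (ih a c (by omega) hac).trans (ih c b (by omega) hcbl)
  exact key _ a b le_rfl h

/-- Theorem 1, part 2: for any trace `θ` and any trace
`θ' ∈ C(A2(A1(θ)))`, the poset abstractions of `θ` and `θ'` are isomorphic. -/
theorem concretization_abstraction_iso {R S : Type}
    (posRule negRule : R → R → S → Prop) (θ θ' : RawTrace R S)
    (hpos : ∀ i j f, θ.pos i j f → (i : ℕ) < (j : ℕ) ∧ posRule (θ.label i) (θ.label j) f)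
    (hneg : ∀ i j f, θ.neg i j f → (j : ℕ) < (i : ℕ) ∧ negRule (θ.label i) (θ.label j) f)
    (hmem : θ' ∈ conc posRule negRule (absPoset θ)) :
    Nonempty (EvPosetIso (absPoset θ) (absPoset θ')) := by
  obtain ⟨σ, h1, h2, h3, h4, h5⟩ := hmem
  -- step relations
  set stepP : Fin θ.n → Fin θ.n → Prop := fun i j => ∃ f, θ.pos i j f with hstepP
  set stepN : Fin θ.n → Fin θ.n → Prop := fun i j => ∃ f, θ.neg j i f with hstepN
  have hrP : ∀ a b, stepP a b → (a : ℕ) < (b : ℕ) := fun a b ⟨f, hf⟩ => (hpos _ _ _ hf).1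
  have hrN : ∀ a b, stepN a b → (a : ℕ) < (b : ℕ) := fun a b ⟨f, hf⟩ => (hneg _ _ _ hf).1
  refine ⟨⟨σ, h1, ?_, ?_⟩⟩
  · intro e e'
    constructor
    · intro h
      have hred := to_red hrP h
      refine Relation.ReflTransGen.lift (p := fun i j => ∃ f, θ'.pos i j f)
        (fun x => σ x) ?_ _ _ hred
      intro a b hab
      obtain ⟨f, hf⟩ := red_step hrP hab
      exact ⟨f, (h4 a b f).2 ⟨(hpos _ _ _ hf).2, hab⟩⟩
    · intro h
      have hlift : Relation.ReflTransGen
          (Relation.ReflTransGen stepP) (σ.symm (σ e)) (σ.symm (σ e')) := by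
        refine Relation.ReflTransGen.lift (fun x => σ.symm x) ?_ _ _ h
        intro x y ⟨f, hf⟩
        have hf' : θ'.pos (σ (σ.symm x)) (σ (σ.symm y)) f := by
          simpa using hf
        exact ((h4 (σ.symm x) (σ.symm y) f).1 hf').2.1
      simp only [Equiv.symm_apply_apply] at hlift
      rw [Relation.reflTransGen_idem] at hlift
      exact hlift
  · intro e e'
    constructor
    · intro h
      have hred := to_red hrN h
      refine Relation.ReflTransGen.lift (p := fun i j => ∃ f, θ'.neg j i f)
        (fun x => σ x) ?_ _ _ hred
      intro a b hab
      obtain ⟨f, hf⟩ := red_step hrN hab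
      exact ⟨f, (h5 b a f).2 ⟨(hneg _ _ _ hf).2, hab⟩⟩
    · intro h
      have hlift : Relation.ReflTransGen
          (Relation.ReflTransGen stepN) (σ.symm (σ e)) (σ.symm (σ e')) := by
        refine Relation.ReflTransGen.lift (fun x => σ.symm x) ?_ _ _ h
        intro x y ⟨f, hf⟩
        have hf' : θ'.neg (σ (σ.symm y)) (σ (σ.symm x)) f := by
          simpa using hf
        exact ((h5 (σ.symm y) (σ.symm x) f).1 hf').2.1
      simp only [Equiv.symm_apply_apply] at hlift
      rw [Relation.reflTransGen_idem] at hlift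
      exact hlift
end
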